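/- Let e, e' be independent edges of a rooted spanning tree T of a weighted graph G. If w(T_e) ≥ 2·w(T_e, T_{e'}), then the weight of the cut determined by {e, e'} is at least w(T_{e'}), i.e., at least the weight of the cut determined by e' alone. -/
import Mathlib


open Finset

/-- Total weight of graph edges with one endpoint in `A` and the other in `B`
(summed over ordered pairs). -/
def betw {V : Type*} [Fintype V] (w : V → V → ℝ) (A B : Finset V) : ℝ :=
  ∑ u ∈ A, ∑ v ∈ B, w u v

/-- Weight of the cut `(S, V \\ S)`: total weight of edges leaving `S`. -/
def cutw {V : Type*} [Fintype V] [DecidableEq V] (w : V → V → ℝ) (S : Finset V) : ℝ :=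
  betw w S Sᶜ

lemma betw_union_left {V : Type*} [Fintype V] [DecidableEq V] (w : V → V → ℝ) (A B C : Finset V)
    (h : Disjoint A B) : betw w (A ∪ B) C = betw w A C + betw w B C := by
  simp [betw, Finset.sum_union h]

lemma betw_union_right {V : Type*} [Fintype V] [DecidableEq V] (w : V → V → ℝ) (A B C : Finset V)
    (h : Disjoint B C) : betw w A (B ∪ C) = betw w A B + betw w A C := by
  simp [betw, Finset.sum_union h, Finset.sum_add_distrib]

lemma betw_comm {V : Type*} [Fintype V] (w : V → V → ℝ)
    (hsym : ∀ u v, w u v = w v u) (A B : Finset V) : betw w A B = betw w B A := by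
  rw [betw, Finset.sum_comm]
  simp [betw, hsym]

/-- For independent tree edges `e, e'` (disjoint subtrees `Te, Te'`):
if `w(Te) ≥ 2 w(Te,Te')` (i.e. `e` is not cross-interested in `e'`), then
the cut determined by {e,e'} weighs at least the cut determined by `e'` alone. -/
theorem stmt_2 {V : Type*} [Fintype V] [DecidableEq V] (w : V → V → ℝ)
    (hsym : ∀ u v, w u v = w v u) (hnn : ∀ u v, 0 ≤ w u v)
    (Te Te' : Finset V) (hdisj : Disjoint Te Te')
    (hni : 2 * betw w Te Te' ≤ cutw w Te) :
    cutw w Te' ≤ cutw w (Te ∪ Te') := by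
  set C := (Te ∪ Te')ᶜ with hC
  have hdC : ∀ (S : Finset V), S ⊆ Te ∪ Te' → Disjoint C S := by
    intro S hS
    exact Finset.disjoint_left.mpr fun x hx hxS =>
      (Finset.mem_compl.mp hx) (hS hxS)
  have h1 : Teᶜ = C ∪ Te' := by
    ext x
    simp only [hC, Finset.mem_compl, Finset.mem_union]
    by_cases h : x ∈ Te'
    · have : x ∉ Te := fun hxTe => (Finset.disjoint_left.mp hdisj hxTe) h
      tauto
    · tauto
  have h2 : Te'ᶜ = C ∪ Te := by
    ext x
    simp only [hC, Finset.mem_compl, Finset.mem_union]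
    by_cases h : x ∈ Te
    · have : x ∉ Te' := fun hxTe => (Finset.disjoint_left.mp hdisj h) hxTe
      tauto
    · tauto
  have e1 : cutw w Te = betw w Te C + betw w Te Te' := by
    rw [cutw, h1, betw_union_right w Te C Te' (hdC Te' Finset.subset_union_right)]
  have e2 : cutw w Te' = betw w Te' C + betw w Te' Te := by
    rw [cutw, h2, betw_union_right w Te' C Te (hdC Te Finset.subset_union_left)]
  have e3 : cutw w (Te ∪ Te') = betw w Te C + betw w Te' C := by
    rw [cutw, betw_union_left w Te Te' C hdisj]
  have hcomm : betw w Te' Te = betw w Te Te' := betw_comm w hsym Te' Te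
  rw [e2, e3]
  rw [e1] at hni
  linarith
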